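/- Let D be a τ-atomic integral domain with τ symmetric, refinable, and associate preserving. If for every x ∈ D^# every vertex a of G_τ(x) satisfies degl(a) < ∞ (degree plus number of loops is finite), then D satisfies τ-ACCP. -/

import Mathlib

/-- `a` is a nonzero nonunit, i.e. an element of `D^#`. -/
def NzNonunit {D : Type*} [CommRing D] (a : D) : Prop := a ≠ 0 ∧ ¬ IsUnit a

/-- `l` is the list of factors of a `τ`-factorization of `a`:
`a = λ * l.prod` for a unit `λ`, the factors are nonzero nonunits and pairwise `τ`-related. -/
def TauFact {D : Type*} [CommRing D] (τ : D → D → Prop) (l : List D) (a : D) : Prop :=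
  l ≠ [] ∧ (∀ b ∈ l, NzNonunit b) ∧ l.Pairwise τ ∧ ∃ u : Dˣ, a = (u : D) * l.prod

/-- `b` τ-divides `a`: `b` occurs as a factor in some τ-factorization of `a`. -/
def TauDvd {D : Type*} [CommRing D] (τ : D → D → Prop) (b a : D) : Prop :=
  ∃ l, TauFact τ l a ∧ b ∈ l

/-- `a` is τ-irreducible (a τ-atom): all its τ-factorizations are trivial. -/
def TauIrred {D : Type*} [CommRing D] (τ : D → D → Prop) (a : D) : Prop :=
  NzNonunit a ∧ ∀ l, TauFact τ l a → l.length = 1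

/-- `l` is a τ-atomic factorization of `a`. -/
def TauAtomicFact {D : Type*} [CommRing D] (τ : D → D → Prop) (l : List D) (a : D) : Prop :=
  TauFact τ l a ∧ ∀ b ∈ l, TauIrred τ b

/-- `D` is τ-atomic: every nonzero nonunit has a τ-atomic factorization. -/
def TauAtomic {D : Type*} [CommRing D] (τ : D → D → Prop) : Prop :=
  ∀ a : D, NzNonunit a → ∃ l, TauAtomicFact τ l a

def TauSymm {D : Type*} [CommRing D] (τ : D → D → Prop) : Prop :=
  ∀ a b, τ a b → τ b a

/-- τ is associate preserving. -/
def TauAssocPres {D : Type*} [CommRing D] (τ : D → D → Prop) : Prop :=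
  ∀ a b b' : D, τ a b → Associated b b' → τ a b'

/-- τ is refinable: replacing each factor of a τ-factorization by a
τ-factorization of it again yields a τ-factorization. -/
def TauRefinable {D : Type*} [CommRing D] (τ : D → D → Prop) : Prop :=
  ∀ (a : D) (l : List D) (F : List (List D)),
    TauFact τ l a → List.Forall₂ (fun b m => TauFact τ m b) l F →
    TauFact τ F.flatten a

/-- `a` is a vertex of the τ-irreducible divisor graph `G_τ(x)`. -/
def GVert {D : Type*} [CommRing D] (τ : D → D → Prop) (x a : D) : Prop :=
  TauIrred τ a ∧ TauDvd τ a x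

/-- `a` and `b` are adjacent (distinct, i.e. non-associated, vertices joined by an edge)
in `G_τ(x)`: some τ-factorization of `x` contains associates of both. -/
def GAdj {D : Type*} [CommRing D] (τ : D → D → Prop) (x a b : D) : Prop :=
  GVert τ x a ∧ GVert τ x b ∧ ¬ Associated a b ∧
  ∃ l, TauFact τ l x ∧ (∃ a' ∈ l, Associated a a') ∧ (∃ b' ∈ l, Associated b b')

/-- `G_τ(x)` is connected (vertices are taken up to associates). -/
def GConnected {D : Type*} [CommRing D] (τ : D → D → Prop) (x : D) : Prop :=
  ∀ a b, GVert τ x a → GVert τ x b →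
    Relation.ReflTransGen (fun u v => GAdj τ x u v ∨ Associated u v) a b

/-- The reduced graph `G̅_τ(x)` (loops deleted) is connected; loops do not affect
connectivity, so this is connectivity with respect to the same adjacency relation. -/
def GBarConnected {D : Type*} [CommRing D] (τ : D → D → Prop) (x : D) : Prop :=
  ∀ a b, GVert τ x a → GVert τ x b →
    Relation.ReflTransGen (fun u v => GAdj τ x u v ∨ Associated u v) a b

/-- `G_τ(x)` is a pseudoclique: any two non-associated vertices are adjacent.
(Equivalently, the reduced graph `G̅_τ(x)` is a clique / complete graph.) -/
def GPseudoclique {D : Type*} [CommRing D] (τ : D → D → Prop) (x : D) : Prop :=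
  ∀ a b, GVert τ x a → GVert τ x b → ¬ Associated a b → GAdj τ x a b

/-- `Diam(G_τ(x)) ≤ 1`: any two vertices are equal (associated) or adjacent. -/
def GDiamLeOne {D : Type*} [CommRing D] (τ : D → D → Prop) (x : D) : Prop :=
  ∀ a b, GVert τ x a → GVert τ x b → Associated a b ∨ GAdj τ x a b

/-- `G_τ(x)` has finitely many vertices (up to associates). -/
def GVertFinite {D : Type*} [CommRing D] (τ : D → D → Prop) (x : D) : Prop :=
  ∃ s : Finset D, ∀ a, GVert τ x a → ∃ c ∈ s, Associated a c

/-- The vertex `a` of `G_τ(x)` has finite degree: finitely many adjacent vertices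
up to associates (loops not counted). -/
def GDegFinite {D : Type*} [CommRing D] (τ : D → D → Prop) (x a : D) : Prop :=
  ∃ s : Finset D, ∀ b, GAdj τ x a b → ∃ c ∈ s, Associated b c

/-- The vertex `a` of `G_τ(x)` carries finitely many loops: there is a uniform bound on
the number of occurrences of associates of `a` in τ-atomic factorizations of `x`. -/
def GLoopsFinite {D : Type*} [CommRing D] (τ : D → D → Prop) (x a : D) : Prop :=
  ∃ N : ℕ, ∀ l m : List D, TauAtomicFact τ l x → m.Sublist l →
    (∀ b ∈ m, Associated a b) → m.length ≤ N

/-- `D` satisfies τ-ACCP. -/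
def TauACCP {D : Type*} [CommRing D] (τ : D → D → Prop) : Prop :=
  ∀ a : ℕ → D, (∀ i, TauDvd τ (a (i + 1)) (a i)) →
    ∃ N, ∀ i, N ≤ i → Associated (a i) (a N)

/-- `D` is a τ-UFD. -/
def TauUFD {D : Type*} [CommRing D] (τ : D → D → Prop) : Prop :=
  TauAtomic τ ∧ ∀ (x : D) (l₁ l₂ : List D), TauAtomicFact τ l₁ x → TauAtomicFact τ l₂ x →
    Multiset.Rel Associated (l₁ : Multiset D) (l₂ : Multiset D)

/-- `D` is a τ-FFD: each nonzero nonunit has only finitely many τ-factorizations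
up to rearrangement and associates. -/
def TauFFD {D : Type*} [CommRing D] (τ : D → D → Prop) : Prop :=
  ∀ x : D, NzNonunit x → ∃ S : Finset (Multiset D),
    ∀ l : List D, TauFact τ l x → ∃ m ∈ S, Multiset.Rel Associated (l : Multiset D) m

/-- `D` is a τ-WFFD: each nonzero nonunit has finitely many τ-divisors up to associates. -/
def TauWFFD {D : Type*} [CommRing D] (τ : D → D → Prop) : Prop :=
  ∀ x : D, NzNonunit x → ∃ s : Finset D,
    ∀ b, TauDvd τ b x → ∃ c ∈ s, Associated b c

/-- `D` is a τ-idf domain: each nonzero nonunit has finitely many τ-irreducible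
τ-divisors up to associates. -/
def TauIdf {D : Type*} [CommRing D] (τ : D → D → Prop) : Prop :=
  ∀ x : D, NzNonunit x → ∃ s : Finset D,
    ∀ b, TauIrred τ b → TauDvd τ b x → ∃ c ∈ s, Associated b c



section Helpers

variable {D : Type*} [CommRing D] [IsDomain D] {τ : D → D → Prop}

lemma tf_perm (hsym : TauSymm τ) {l l' : List D} {a : D} (h : TauFact τ l a)
    (hp : l.Perm l') : TauFact τ l' a := by
  obtain ⟨hne, hmem, hpw, u, hu⟩ := h
  refine ⟨?_, fun b hb => hmem b (hp.mem_iff.mpr hb), ?_, u, ?_⟩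
  · intro h0; exact hne ((h0 ▸ hp).eq_nil)
  · exact ((hp.pairwise_iff (fun {x y} hxy => hsym x y hxy)).mp hpw)
  · rw [hu, hp.prod_eq]

lemma tf_singleton {b : D} (h : NzNonunit b) : TauFact τ [b] b :=
  ⟨by simp, by simpa using h, by simp, 1, by simp⟩

lemma tf_nz {l : List D} {a : D} (h : TauFact τ l a) : NzNonunit a := by
  obtain ⟨hne, hmem, -, u, hu⟩ := h
  obtain ⟨b, hb⟩ := List.exists_mem_of_ne_nil l hne
  have hbd : b ∣ a := hu ▸ (List.dvd_prod hb).trans (Dvd.intro_left _ rfl)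
  constructor
  · rintro rfl
    have hprod : l.prod ≠ 0 := List.prod_ne_zero (fun h0' => (hmem 0 h0').1 rfl)
    rcases mul_eq_zero.mp hu.symm with h | h
    · exact u.ne_zero h
    · exact hprod h
  · intro hun
    exact (hmem b hb).2 (isUnit_of_dvd_unit hbd hun)

lemma tdvd_dvd {b a : D} (h : TauDvd τ b a) : b ∣ a := by
  obtain ⟨l, ⟨-, -, -, u, hu⟩, hb⟩ := h
  exact hu ▸ (List.dvd_prod hb).trans (Dvd.intro_left _ rfl)

lemma forall2_map {r : D → List D → Prop} {l : List D} {f : D → List D}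
    (h : ∀ b ∈ l, r b (f b)) : List.Forall₂ r l (l.map f) := by
  induction l with
  | nil => simp
  | cons a t ih => exact List.Forall₂.cons (h a (by simp)) (ih fun b hb => h b (by simp [hb]))

lemma tdvd_trans (href : TauRefinable τ) {c b a : D}
    (h1 : TauDvd τ c b) (h2 : TauDvd τ b a) : TauDvd τ c a := by
  classical
  obtain ⟨m, hm, hc⟩ := h1
  obtain ⟨l, hl, hb⟩ := h2
  refine ⟨(l.map (fun d => if d = b then m else [d])).flatten, ?_, ?_⟩
  · exact href a l _ hl (forall2_map fun d hd => by
      by_cases hdb : d = b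
      · simpa [hdb] using hm
      · simpa [hdb] using tf_singleton (hl.2.1 d hd))
  · exact List.mem_flatten.mpr ⟨m, List.mem_map.mpr ⟨b, hb, by simp⟩, hc⟩


lemma len_le_sum_filter (s : Finset D) (Q : D → D → Prop) [∀ c e, Decidable (Q c e)] :
    ∀ m : List D, (∀ e ∈ m, ∃ c ∈ s, Q c e) →
      m.length ≤ ∑ c ∈ s, (m.filter (fun e => Q c e)).length := by
  intro m
  induction m with
  | nil => simp
  | cons e t ih =>
    intro h
    obtain ⟨c0, hc0s, hc0⟩ := h e (by simp)
    have h1 : t.length ≤ ∑ c ∈ s, (t.filter (fun e => Q c e)).length :=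
      ih (fun e' he' => h e' (by simp [he']))
    have h2 : ∀ c ∈ s, ((e :: t).filter (fun e' => Q c e')).length
        = (if Q c e then 1 else 0) + (t.filter (fun e' => Q c e')).length := by
      intro c hc
      by_cases hq : Q c e <;> simp [List.filter_cons, hq, Nat.add_comm]
    rw [Finset.sum_congr rfl h2, Finset.sum_add_distrib]
    have h3 : (1:ℕ) ≤ ∑ c ∈ s, if Q c e then 1 else 0 := by
      simpa [hc0] using Finset.single_le_sum (f := fun c => if Q c e then (1:ℕ) else 0)
        (fun i _ => Nat.zero_le _) hc0s
    simp only [List.length_cons]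
    omega

lemma flatten_map_singleton' {α : Type*} : ∀ (R : List α), (R.map (fun d => [d])).flatten = R := by
  intro R
  induction R with
  | nil => simp
  | cons d t ih => simp [ih]

lemma flatten_len_ge (f : D → List D) :
    ∀ L : List D, (∀ b ∈ L, f b ≠ []) → L.length ≤ (L.map f).flatten.length := by
  intro L
  induction L with
  | nil => simp
  | cons b t ih =>
    intro h
    simp only [List.map_cons, List.flatten_cons, List.length_append, List.length_cons]
    have h1 : 1 ≤ (f b).length := List.length_pos_iff.mpr (h b (by simp))
    have h2 := ih (fun b' hb' => h b' (by simp [hb']))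
    omega

end Helpers

theorem stmt5 {D : Type*} [CommRing D] [IsDomain D] (τ : D → D → Prop)
    (hsym : TauSymm τ) (href : TauRefinable τ) (hap : TauAssocPres τ)
    (hatomic : TauAtomic τ)
    (hdegl : ∀ x : D, NzNonunit x → ∀ a, GVert τ x a →
      GDegFinite τ x a ∧ GLoopsFinite τ x a) :
    TauACCP τ := by
  classical
  have hAt' : ∀ b : D, ∃ l, NzNonunit b → TauAtomicFact τ l b := by
    intro b
    by_cases h : NzNonunit b
    · exact ⟨(hatomic b h).choose, fun _ => (hatomic b h).choose_spec⟩
    · exact ⟨[], fun h' => absurd h' h⟩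
  choose At hAt using hAt'
  intro a ha
  by_contra hcon
  push_neg at hcon
  have hdvd_le : ∀ i j, i ≤ j → a j ∣ a i := by
    intro i j hij
    induction j, hij using Nat.le_induction with
    | base => exact dvd_refl _
    | succ j hij ihj => exact (tdvd_dvd (ha j)).trans ihj
  have htd : ∀ i j, i + 1 ≤ j → TauDvd τ (a j) (a i) := by
    intro i j hij
    induction j, hij using Nat.le_induction with
    | base => exact ha i
    | succ j hij ihj => exact tdvd_trans href (ha j) ihj
  have assocRun : ∀ N i, N ≤ i → (∀ j, N ≤ j → j < i → Associated (a (j+1)) (a j)) →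
      Associated (a i) (a N) := by
    intro N i hNi
    induction i, hNi using Nat.le_induction with
    | base => exact fun _ => Associated.refl _
    | succ i hNi ihi =>
      intro h
      exact (h i hNi (Nat.lt_succ_self i)).trans
        (ihi fun j hj hji => h j hj (hji.trans (Nat.lt_succ_self i)))
  have hS : ∀ N, ∃ i, N ≤ i ∧ ¬ Associated (a (i+1)) (a i) := by
    intro N
    by_contra h
    push_neg at h
    obtain ⟨i, hNi, hni⟩ := hcon N
    exact hni (assocRun N i hNi (fun j hj _ => h j hj))
  choose f hf1 hf2 using hS
  obtain ⟨g, hg0, hgs⟩ : ∃ g : ℕ → ℕ, g 0 = f 0 ∧ ∀ k, g (k+1) = f (g k + 1) :=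
    ⟨fun k => Nat.rec (f 0) (fun _ p => f (p+1)) k, rfl, fun _ => rfl⟩
  have hgP : ∀ k, ¬ Associated (a (g k + 1)) (a (g k)) := by
    intro k
    cases k with
    | zero => rw [hg0]; exact hf2 0
    | succ n => rw [hgs n]; exact hf2 _
  have hglt : ∀ k, g k < g (k+1) := by
    intro k
    rw [hgs k]
    exact Nat.lt_of_lt_of_le (Nat.lt_succ_self _) (hf1 _)
  have hdc : ∀ k, TauDvd τ (a (g (k+1))) (a (g k)) := fun k => htd _ _ (hglt k)
  have hpc : ∀ k, ¬ Associated (a (g (k+1))) (a (g k)) := by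
    intro k hA
    apply hgP k
    have d1 : a (g (k+1)) ∣ a (g k + 1) := hdvd_le _ _ (hglt k)
    have d2 : a (g k + 1) ∣ a (g k) := tdvd_dvd (ha (g k))
    exact associated_of_dvd_dvd d2 (hA.symm.dvd.trans d1)
  set x : D := a (g 0) with hxdef
  have hx : NzNonunit x := by
    obtain ⟨l, hl, -⟩ := hdc 0
    exact tf_nz hl
  have step : ∀ n (R : List D), TauFact τ (a (g n) :: R) x →
      ∃ r : List D, r ≠ [] ∧ TauFact τ (a (g (n+1)) :: (r ++ R)) x := by
    intro n R hCR
    obtain ⟨l, hl, hmem⟩ := hdc n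
    have hperm : l.Perm (a (g (n+1)) :: l.erase (a (g (n+1)))) := List.perm_cons_erase hmem
    have hrne : l.erase (a (g (n+1))) ≠ [] := by
      intro h0
      apply hpc n
      rw [h0] at hperm
      obtain ⟨-, -, -, u, hu⟩ := tf_perm hsym hl hperm
      exact ⟨u, by rw [hu, List.prod_singleton]; ring⟩
    refine ⟨l.erase (a (g (n+1))), hrne, ?_⟩
    have hF : TauFact τ (l ++ R) x := by
      have h2 := href x (a (g n) :: R) (l :: R.map (fun d => [d])) hCR
        (List.Forall₂.cons hl (forall2_map fun d hd => tf_singleton (hCR.2.1 d (by simp [hd]))))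
      have heq : (l :: R.map (fun d => [d])).flatten = l ++ R := by
        simp [flatten_map_singleton']
      rwa [heq] at h2
    exact tf_perm hsym hF (hperm.append_right R)
  obtain ⟨r0, hr0ne, hC1⟩ := step 0 [] (tf_singleton hx)
  obtain ⟨q, hq⟩ := List.exists_mem_of_ne_nil r0 hr0ne
  have inv : ∀ n, ∃ R, TauFact τ (a (g (n+1)) :: R) x ∧ q ∈ R ∧ n + 1 ≤ R.length := by
    intro n
    induction n with
    | zero =>
      exact ⟨r0 ++ [], hC1, by simp [hq], by simpa using Nat.succ_le_of_lt (List.length_pos_iff.mpr hr0ne)⟩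
    | succ n ihn =>
      obtain ⟨R, hR, hqR, hlen⟩ := ihn
      obtain ⟨r, hrne, hR'⟩ := step (n+1) R hR
      refine ⟨r ++ R, hR', by simp [hqR], ?_⟩
      have h1 : 1 ≤ r.length := List.length_pos_iff.mpr hrne
      simp only [List.length_append]
      omega
  have hatomize : ∀ (L : List D), TauFact τ L x →
      TauAtomicFact τ ((L.map At).flatten) x ∧
        ∀ b ∈ L, ∀ p ∈ At b, p ∈ (L.map At).flatten := by
    intro L hL
    have hAtL : ∀ b ∈ L, TauAtomicFact τ (At b) b := fun b hb => hAt b (hL.2.1 b hb)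
    refine ⟨⟨?_, ?_⟩, ?_⟩
    · exact href x L (L.map At) hL (forall2_map fun b hb => (hAtL b hb).1)
    · intro p hp
      obtain ⟨m, hm, hpm⟩ := List.mem_flatten.mp hp
      obtain ⟨b, hb, rfl⟩ := List.mem_map.mp hm
      exact (hAtL b hb).2 p hpm
    · intro b hb p hp
      exact List.mem_flatten.mpr ⟨At b, List.mem_map.mpr ⟨b, hb, rfl⟩, hp⟩
  have hqnz : NzNonunit q := hC1.2.1 q (by simp [hq])
  have hAtq := hAt q hqnz
  obtain ⟨p, hpAtq⟩ := List.exists_mem_of_ne_nil _ hAtq.1.1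
  obtain ⟨R0, hR0, hqR0, -⟩ := inv 0
  obtain ⟨hA0, hA0mem⟩ := hatomize _ hR0
  have hpA0 : p ∈ ((a (g 1) :: R0).map At).flatten := hA0mem q (by simp [hqR0]) p hpAtq
  have hpvert : GVert τ x p := ⟨hA0.2 p hpA0, ⟨_, hA0.1, hpA0⟩⟩
  obtain ⟨⟨s, hs⟩, -⟩ := hdegl x hx p hpvert
  have bdd : ∀ cc : D, ∃ N : ℕ, ∀ l m : List D, TauAtomicFact τ l x → m.Sublist l →
      (∀ e ∈ m, Associated cc e) → m.length ≤ N := by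
    intro cc
    by_cases hex : ∃ b, GVert τ x b ∧ Associated cc b
    · obtain ⟨b, hbv, hcb⟩ := hex
      obtain ⟨-, N, hN⟩ := hdegl x hx b hbv
      exact ⟨N, fun l m hl hml hme =>
        hN l m hl hml (fun e he => (hcb.symm.trans (hme e he)))⟩
    · refine ⟨0, fun l m hl hml hme => ?_⟩
      cases m with
      | nil => simp
      | cons e t =>
        exact absurd ⟨e, ⟨hl.2 e (hml.subset (by simp)), ⟨l, hl.1, hml.subset (by simp)⟩⟩,
          hme e (by simp)⟩ hex
  choose B hB using bdd
  have bound : ∀ l : List D, TauAtomicFact τ l x → p ∈ l →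
      l.length ≤ ∑ cI ∈ insert p s, B cI := by
    intro l hl hpl
    have hvert : ∀ e ∈ l, GVert τ x e := fun e he => ⟨hl.2 e he, ⟨l, hl.1, he⟩⟩
    have cover : ∀ e ∈ l, ∃ cI ∈ insert p s, Associated cI e := by
      intro e he
      by_cases hpe : Associated p e
      · exact ⟨p, Finset.mem_insert_self _ _, hpe⟩
      · have hadj : GAdj τ x p e :=
          ⟨hpvert, hvert e he, hpe, l, hl.1, ⟨p, hpl, Associated.refl p⟩,
            ⟨e, he, Associated.refl e⟩⟩
        obtain ⟨cI, hcs, hce⟩ := hs e hadj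
        exact ⟨cI, Finset.mem_insert_of_mem hcs, hce.symm⟩
    calc l.length
        ≤ ∑ cI ∈ insert p s, (l.filter (fun e => Associated cI e)).length :=
          len_le_sum_filter _ _ l cover
      _ ≤ ∑ cI ∈ insert p s, B cI :=
          Finset.sum_le_sum (fun cI _ => hB cI l _ hl List.filter_sublist
            (fun e he => by simpa using (List.mem_filter.mp he).2))
  obtain ⟨R, hR, hqR, hlen⟩ := inv (∑ cI ∈ insert p s, B cI)
  obtain ⟨hA, hAmem⟩ := hatomize _ hR
  have hpA : p ∈ ((a (g (∑ cI ∈ insert p s, B cI + 1)) :: R).map At).flatten :=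
    hAmem q (by simp [hqR]) p hpAtq
  have h1 : (a (g (∑ cI ∈ insert p s, B cI + 1)) :: R).length
      ≤ ((a (g (∑ cI ∈ insert p s, B cI + 1)) :: R).map At).flatten.length :=
    flatten_len_ge At _ (fun b hb => (hAt b (hR.2.1 b hb)).1.1)
  have h2 := bound _ hA hpA
  simp only [List.length_cons] at h1
  omega
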